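/- arXiv:1903.12291 — 12 statements merged into one kernel-verified Lean document; each statement's English description precedes it below -/
import Mathlib

section
/- Let Q be a complete lattice and ≪ a reflexive relation on Q stronger than ≤ that is transitive and up-expanded (i.e., for every a, the set {x : a ≪ x} is closed under suprema of nonempty subsets). Then for every interval [a,b] in Q, the element r = ⊔{x ∈ [a,b] : a ≪ x} satisfies a ≪ r and there is no y with r < y ≤ b and r ≪ y; i.e., r is a ≪-radical in [a,b]. -/
theorem stmt0 {Q : Type*} [CompleteLattice Q] (rel : Q → Q → Prop)
    (hrefl : ∀ a, rel a a) (hstr : ∀ a b, rel a b → a ≤ b)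
    (htrans : ∀ a b c, rel a b → rel b c → rel a c)
    (hue : ∀ a, ∀ N : Set Q, N.Nonempty → (∀ x ∈ N, rel a x) → rel a (sSup N))
    (a b : Q) (hab : a ≤ b) :
    rel a (sSup {x | x ∈ Set.Icc a b ∧ rel a x}) ∧
    ∀ y, sSup {x | x ∈ Set.Icc a b ∧ rel a x} < y → y ≤ b →
      ¬ rel (sSup {x | x ∈ Set.Icc a b ∧ rel a x}) y := by
  set S : Set Q := {x | x ∈ Set.Icc a b ∧ rel a x} with hS
  have har : rel a (sSup S) :=
    hue a S ⟨a, ⟨le_refl a, hab⟩, hrefl a⟩ (fun x hx => hx.2)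
  refine ⟨har, fun y hlt hyb hry => ?_⟩
  have hy : y ∈ S := ⟨⟨le_trans (hstr _ _ har) hlt.le, hyb⟩, htrans _ _ _ har hry⟩
  exact absurd (le_sSup hy) (not_le_of_gt hlt)
end

section
/- Let Q be a complete lattice and ≪ a T-order on Q (a transitive reflexive relation stronger than ≤ that is up-contiguous and up-expanded). Then every interval [a,b] in Q has a unique ≪-radical, namely r = ⊔{x ∈ [a,b] : a ≪ x}, and moreover [a,r] = [a,b] ∩ {x : x ≪ r}. -/
theorem stmt1 {Q : Type*} [CompleteLattice Q] (rel : Q → Q → Prop)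
    (hrefl : ∀ a, rel a a) (hstr : ∀ a b, rel a b → a ≤ b)
    (htrans : ∀ a b c, rel a b → rel b c → rel a c)
    (huc : ∀ a b, rel a b → ∀ z, a ≤ z → z ≤ b → rel z b)
    (hue : ∀ a, ∀ N : Set Q, N.Nonempty → (∀ x ∈ N, rel a x) → rel a (sSup N))
    (a b : Q) (hab : a ≤ b) (R : Q)
    (hR : R = sSup {x | x ∈ Set.Icc a b ∧ rel a x}) :
    (R ∈ Set.Icc a b ∧ rel a R ∧ ∀ y, R < y → y ≤ b → ¬ rel R y) ∧
    (∀ ρ, ρ ∈ Set.Icc a b → rel a ρ → (∀ y, ρ < y → y ≤ b → ¬ rel ρ y) → ρ = R) ∧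
    Set.Icc a R = Set.Icc a b ∩ {x | rel x R} := by
  set S : Set Q := {x | x ∈ Set.Icc a b ∧ rel a x} with hS
  have haS : a ∈ S := ⟨⟨le_refl a, hab⟩, hrefl a⟩
  have hne : S.Nonempty := ⟨a, haS⟩
  have hRa : a ≤ R := hR ▸ le_sSup haS
  have hRb : R ≤ b := hR ▸ sSup_le (fun x hx => hx.1.2)
  have hrelaR : rel a R := hR ▸ hue a S hne (fun x hx => hx.2)
  have hmax : ∀ y, R < y → y ≤ b → ¬ rel R y := by
    intro y hy hyb hrel
    have : y ∈ S := ⟨⟨hRa.trans hy.le, hyb⟩, htrans a R y hrelaR hrel⟩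
    have : y ≤ R := hR ▸ le_sSup this
    exact absurd this hy.not_ge
  refine ⟨⟨⟨hRa, hRb⟩, hrelaR, hmax⟩, ?_, ?_⟩
  · intro ρ hρ hrelaρ hmaxρ
    have hρR : ρ ≤ R := hR ▸ le_sSup ⟨hρ, hrelaρ⟩
    rcases eq_or_lt_of_le hρR with h | h
    · exact h
    · exact absurd (huc a R hrelaR ρ hρ.1 hρR) (hmaxρ R h hRb)
  · ext x
    constructor
    · rintro ⟨hax, hxR⟩
      exact ⟨⟨hax, hxR.trans hRb⟩, huc a R hrelaR x hax hxR⟩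
    · rintro ⟨⟨hax, _⟩, hxR⟩
      exact ⟨hax, hstr _ _ hxR⟩
end

section
/- Let Q be a complete lattice and ≪ a transitive reflexive relation stronger than ≤ that is up-contiguous. If every interval [a,b] in Q has a unique ≪-radical, then ≪ is up-expanded (i.e., for every a, the set {x : a ≪ x} is closed under suprema of nonempty subsets). -/
theorem stmt2 {Q : Type*} [CompleteLattice Q] (rel : Q → Q → Prop)
    (hrefl : ∀ a, rel a a) (hstr : ∀ a b, rel a b → a ≤ b)
    (htrans : ∀ a b c, rel a b → rel b c → rel a c)
    (huc : ∀ a b, rel a b → ∀ z, a ≤ z → z ≤ b → rel z b)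
    (hrad : ∀ a b : Q, a ≤ b →
      ∃! ρ, rel a ρ ∧ ρ ≤ b ∧ ∀ y, ρ ≤ y → y ≤ b → rel ρ y → y = ρ) :
    ∀ a, ∀ N : Set Q, N.Nonempty → (∀ x ∈ N, rel a x) → rel a (sSup N) := by
  intro a N hN hrel
  obtain ⟨x0, hx0⟩ := hN
  set s := sSup N with hs
  have has : a ≤ s := le_trans (hstr _ _ (hrel x0 hx0)) (le_sSup hx0)
  obtain ⟨r, ⟨har, hrs, hrmax⟩, hruniq⟩ := hrad a s has
  -- every x ∈ N is ≤ r
  have hxr : ∀ x ∈ N, x ≤ r := by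
    intro x hx
    have hxs : x ≤ s := le_sSup hx
    obtain ⟨u, ⟨hxu, hus, humax⟩, _⟩ := hrad x s hxs
    have hau : rel a u := htrans _ _ _ (hrel x hx) hxu
    have : u = r := by
      apply hruniq
      refine ⟨hau, hus, ?_⟩
      intro y hy hys hrel'
      exact humax y hy hys hrel'
    exact this ▸ hstr _ _ hxu
  have : s ≤ r := sSup_le hxr
  have : r = s := le_antisymm hrs this
  exact this ▸ har
end

section
/- Let ≪ be a dual T-order on a complete lattice Q, and for b ∈ Q let p(b) = ⊓{x : x ≪ b}. Then: p(p(b)) = p(b) for all b; if a ≪ b then p(b) = p(a) and p(a) ≪ a; and if p(b) ≤ a ≤ b then p(b) = p(a) and p(a) ≪ a. -/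
theorem stmt3 {Q : Type*} [CompleteLattice Q] (rel : Q → Q → Prop)
    (hrefl : ∀ a, rel a a) (hstr : ∀ a b, rel a b → a ≤ b)
    (htrans : ∀ a b c, rel a b → rel b c → rel a c)
    (hdc : ∀ a b, rel a b → ∀ z, a ≤ z → z ≤ b → rel a z)
    (hde : ∀ b, ∀ N : Set Q, N.Nonempty → (∀ x ∈ N, rel x b) → rel (sInf N) b)
    (p : Q → Q) (hp : ∀ b, p b = sInf {x | rel x b}) :
    (∀ b, p (p b) = p b) ∧
    (∀ a b, rel a b → p b = p a ∧ rel (p a) a) ∧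
    (∀ a b, p b ≤ a → a ≤ b → p b = p a ∧ rel (p a) a) := by
  -- p b ≪ b for all b
  have hpb : ∀ b, rel (p b) b := by
    intro b
    rw [hp]
    exact hde b _ ⟨b, hrefl b⟩ (fun x hx => hx)
  -- p b ≤ x whenever x ≪ b
  have hle : ∀ b x, rel x b → p b ≤ x := by
    intro b x hx
    rw [hp]
    exact sInf_le hx
  -- monotone-ish: x ≪ b for all x ∈ set a implies p b ≤ p a
  have hmon : ∀ a b, rel a b → p b ≤ p a := by
    intro a b hab
    rw [hp a]
    exact le_sInf fun x hx => hle b x (htrans x a b hx hab)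
  have h1 : ∀ b, p (p b) = p b := by
    intro b
    apply le_antisymm
    · exact hle (p b) (p b) (hrefl (p b))
    · rw [hp (p b)]
      exact le_sInf fun x hx => hle b x (htrans x (p b) b hx (hpb b))
  have h2 : ∀ a b, rel a b → p b = p a ∧ rel (p a) a := by
    intro a b hab
    have hpba : rel (p b) a := hdc (p b) b (hpb b) a (hle b a hab) (hstr a b hab)
    have heq : p b = p a := le_antisymm (hmon a b hab) (hle a (p b) hpba)
    exact ⟨heq, heq ▸ hpba⟩
  refine ⟨h1, h2, fun a b h1' h2' => ?_⟩
  have hpba : rel (p b) a := hdc (p b) b (hpb b) a h1' h2'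
  have := h2 (p b) a hpba
  rw [h1 b] at this
  exact ⟨this.1.symm, this.1 ▸ hpba⟩
end

section
/- Let Q be a complete lattice. The map g ↦ ≪^g, where x ≪^g y iff x ≤ y and g(x) = g(y), is a bijection from the set of dual pre-radical maps on Q onto the set of contiguous dual T-orders on Q, with inverse ≪ ↦ (b ↦ ⊓{x : x ≪ b}). -/
/-- A dual pre-radical map on a complete lattice. -/
def DualPreRadical {Q : Type*} [CompleteLattice Q] (g : Q → Q) : Prop :=
  (∀ x, g (g x) = g x) ∧ (∀ x, g x ≤ x) ∧ ∀ x y, g x < y → y < x → g y = g x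

/-- A contiguous dual T-order: a reflexive transitive relation stronger than ≤ which is
down-contiguous, up-contiguous and down-expanded. -/
def ContigDualTOrder {Q : Type*} [CompleteLattice Q] (rel : Q → Q → Prop) : Prop :=
  (∀ a, rel a a) ∧ (∀ a b, rel a b → a ≤ b) ∧
  (∀ a b c, rel a b → rel b c → rel a c) ∧
  (∀ a b, rel a b → ∀ z, a ≤ z → z ≤ b → rel a z) ∧
  (∀ a b, rel a b → ∀ z, a ≤ z → z ≤ b → rel z b) ∧
  (∀ b, ∀ N : Set Q, N.Nonempty → (∀ x ∈ N, rel x b) → rel (sInf N) b)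

/-- The relation associated to a map `g`. -/
def relOf {Q : Type*} [CompleteLattice Q] (g : Q → Q) : Q → Q → Prop :=
  fun x y => x ≤ y ∧ g x = g y

/-- The dual radical map associated to a relation. -/
def pOf {Q : Type*} [CompleteLattice Q] (rel : Q → Q → Prop) : Q → Q :=
  fun b => sInf {x | rel x b}

lemma between_lemma {Q : Type*} [CompleteLattice Q] {g : Q → Q} (hg : DualPreRadical g)
    {b z : Q} (h1 : g b ≤ z) (h2 : z ≤ b) : g z = g b := by
  obtain ⟨hid, hle, hmid⟩ := hg
  rcases eq_or_lt_of_le h2 with rfl | h2'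
  · rfl
  · rcases eq_or_lt_of_le h1 with rfl | h1'
    · exact hid b
    · exact hmid b z h1' h2'

theorem stmt4 {Q : Type*} [CompleteLattice Q] :
    (∀ g : Q → Q, DualPreRadical g → ContigDualTOrder (relOf g) ∧ pOf (relOf g) = g) ∧
    (∀ rel : Q → Q → Prop, ContigDualTOrder rel →
      DualPreRadical (pOf rel) ∧ relOf (pOf rel) = rel) := by
  constructor
  · intro g hg
    obtain ⟨hid, hle, hmid⟩ := hg
    constructor
    · refine ⟨fun a => ⟨le_rfl, rfl⟩, fun a b h => h.1,
        fun a b c hab hbc => ⟨hab.1.trans hbc.1, hab.2.trans hbc.2⟩,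
        ?_, ?_, ?_⟩
      · intro a b hab z haz hzb
        obtain ⟨hab1, hg'⟩ := hab
        refine ⟨haz, ?_⟩
        have := between_lemma ⟨hid, hle, hmid⟩ (z := z) (b := b)
          (hg' ▸ (hle a).trans haz) hzb
        rw [this, hg']
      · intro a b hab z haz hzb
        obtain ⟨hab1, hg'⟩ := hab
        refine ⟨hzb, ?_⟩
        exact between_lemma ⟨hid, hle, hmid⟩ (z := z) (b := b)
          (hg' ▸ (hle a).trans haz) hzb
      · intro b N hN1 hN
        obtain ⟨x₀, hx₀⟩ := hN1
        have hgb : g b ≤ sInf N := le_sInf fun x hx => (hN x hx).2 ▸ hle x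
        have hNb : sInf N ≤ b := (sInf_le hx₀).trans (hN x₀ hx₀).1
        exact ⟨hNb, between_lemma ⟨hid, hle, hmid⟩ hgb hNb⟩
    · funext b
      apply le_antisymm
      · exact sInf_le ⟨hle b, hid b⟩
      · exact le_sInf fun x hx => hx.2 ▸ hle x
  · intro rel hrel
    obtain ⟨hrefl, hord, htrans, hdown, hup, hexp⟩ := hrel
    have hpb : ∀ b, rel (pOf rel b) b := fun b =>
      hexp b _ ⟨b, hrefl b⟩ (fun x hx => hx)
    have hple : ∀ b, pOf rel b ≤ b := fun b => hord _ _ (hpb b)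
    have hchar : ∀ x b, pOf rel b ≤ x → x ≤ b → rel x b := by
      intro x b h1 h2
      exact hup _ _ (hpb b) x h1 h2
    have hidem : ∀ b, pOf rel (pOf rel b) = pOf rel b := by
      intro b
      apply le_antisymm (hple _)
      exact le_sInf fun x hx => sInf_le (htrans _ _ _ hx (hpb b))
    constructor
    · refine ⟨hidem, hple, ?_⟩
      intro b y h1 h2
      apply le_antisymm
      · exact sInf_le (hdown _ _ (hpb b) y h1.le h2.le)
      · exact le_sInf fun x hx => sInf_le (htrans _ _ _ hx
          (hchar y b h1.le h2.le))
    · funext x y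
      show (x ≤ y ∧ pOf rel x = pOf rel y) = rel x y
      apply propext
      constructor
      · rintro ⟨hxy, hp⟩
        exact hup _ _ (hpb y) x (hp ▸ hple x) hxy
      · intro h
        have hxy := hord _ _ h
        refine ⟨hxy, le_antisymm ?_ ?_⟩
        · exact sInf_le (hdown _ _ (hpb y) x (sInf_le h) hxy)
        · exact le_sInf fun z hz => sInf_le (htrans _ _ _ hz h)
end

section
/- For a relation ≪ on a complete lattice Q, the following are equivalent: (1) ≪ is up-contiguous and a ∧ b ≪ b implies a ≪ a ∨ b; (2) a ≪ b and a ≤ c imply c ≪ b ∨ c; (3) a ≪ b implies a ∨ x ≪ b ∨ x for every x ∈ Q. -/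
theorem stmt5 {Q : Type*} [CompleteLattice Q] (rel : Q → Q → Prop)
    (hrefl : ∀ a, rel a a) (hstr : ∀ a b, rel a b → a ≤ b) :
    (((∀ a b, rel a b → ∀ z, a ≤ z → z ≤ b → rel z b) ∧
        (∀ a b, rel (a ⊓ b) b → rel a (a ⊔ b))) ↔
      (∀ a b c, rel a b → a ≤ c → rel c (b ⊔ c))) ∧
    ((∀ a b c, rel a b → a ≤ c → rel c (b ⊔ c)) ↔
      (∀ a b x, rel a b → rel (a ⊔ x) (b ⊔ x))) := by
  constructor
  · constructor
    · rintro ⟨h1, h2⟩ a b c hab hac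
      have hcb : rel (c ⊓ b) b :=
        h1 a b hab (c ⊓ b) (le_inf hac (hstr a b hab)) inf_le_right
      have := h2 c b hcb
      rwa [sup_comm] at this
    · intro h
      constructor
      · intro a b hab z haz hzb
        have := h a b z hab haz
        rwa [sup_eq_left.mpr hzb] at this
      · intro a b hab
        have := h (a ⊓ b) b a hab inf_le_left
        rwa [sup_comm] at this
  · constructor
    · intro h a b x hab
      have := h a b (a ⊔ x) hab le_sup_left
      have heq : b ⊔ (a ⊔ x) = b ⊔ x := by
        rw [← sup_assoc, sup_eq_left.mpr (hstr a b hab)]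
      rwa [heq] at this
    · intro h a b c hab hac
      have := h a b c hab
      rwa [sup_eq_right.mpr hac] at this
end

section
/- Let ≪ be a dual R-order on a complete lattice Q and p(b) = ⊓{x : x ≪ b}. Then for all a, b ∈ Q: p(a ∧ b) ≪ p(a) ∧ p(b), p(a) ∧ p(b) ≪ a ∧ b, and a ≤ b implies p(a) ≤ p(b). -/
theorem stmt7 {Q : Type*} [CompleteLattice Q] (rel : Q → Q → Prop)
    (hrefl : ∀ a, rel a a) (hstr : ∀ a b, rel a b → a ≤ b)
    (htrans : ∀ a b c, rel a b → rel b c → rel a c)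
    (hdH : ∀ a b x, rel a b → rel (a ⊓ x) (b ⊓ x))
    (hde : ∀ b, ∀ N : Set Q, N.Nonempty → (∀ x ∈ N, rel x b) → rel (sInf N) b)
    (p : Q → Q) (hp : ∀ b, p b = sInf {x | rel x b}) :
    ∀ a b : Q, rel (p (a ⊓ b)) (p a ⊓ p b) ∧ rel (p a ⊓ p b) (a ⊓ b) ∧
      (a ≤ b → p a ≤ p b) := by
  have hpb : ∀ b, rel (p b) b := by
    intro b
    rw [hp]
    exact hde b _ ⟨b, hrefl b⟩ (fun x hx => hx)
  have hple : ∀ b x, rel x b → p b ≤ x := by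
    intro b x hx
    rw [hp]
    exact sInf_le hx
  have hmono : ∀ a b : Q, a ≤ b → p a ≤ p b := by
    intro a b hab
    rw [hp b]
    refine le_sInf fun y hy => ?_
    have : rel (y ⊓ a) (b ⊓ a) := hdH _ _ a hy
    rw [inf_eq_right.mpr hab] at this
    exact (hple a _ this).trans inf_le_left
  intro a b
  have h2 : rel (p a ⊓ p b) (a ⊓ b) := by
    have h1 : rel (p a ⊓ p b) (a ⊓ p b) := hdH _ _ _ (hpb a)
    have h2 : rel (p b ⊓ a) (b ⊓ a) := hdH _ _ _ (hpb b)
    rw [inf_comm (p b) a, inf_comm b a] at h2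
    exact htrans _ _ _ h1 h2
  refine ⟨?_, h2, hmono a b⟩
  have hle : p (a ⊓ b) ≤ p a ⊓ p b := hple _ _ h2
  have h3 : rel (p (a ⊓ b) ⊓ (p a ⊓ p b)) ((a ⊓ b) ⊓ (p a ⊓ p b)) :=
    hdH _ _ _ (hpb (a ⊓ b))
  rwa [inf_eq_left.mpr hle, inf_eq_right.mpr (hstr _ _ h2)] at h3
end

section
/- Let ≪ be an H-relation that is also a dual R-order on a complete lattice Q, and p(b) = ⊓{x : x ≪ b}. Then p(a ∨ b) = p(a) ∨ p(b) for all a, b ∈ Q. -/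
theorem stmt8 {Q : Type*} [CompleteLattice Q] (rel : Q → Q → Prop)
    (hrefl : ∀ a, rel a a) (hstr : ∀ a b, rel a b → a ≤ b)
    (htrans : ∀ a b c, rel a b → rel b c → rel a c)
    (hH : ∀ a b x, rel a b → rel (a ⊔ x) (b ⊔ x))
    (hdH : ∀ a b x, rel a b → rel (a ⊓ x) (b ⊓ x))
    (hde : ∀ b, ∀ N : Set Q, N.Nonempty → (∀ x ∈ N, rel x b) → rel (sInf N) b)
    (p : Q → Q) (hp : ∀ b, p b = sInf {x | rel x b}) :
    ∀ a b : Q, p (a ⊔ b) = p a ⊔ p b := by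
  have hpb : ∀ b, rel (p b) b := by
    intro b
    rw [hp]
    exact hde b _ ⟨b, hrefl b⟩ (fun x hx => hx)
  intro a b
  apply le_antisymm
  · -- p (a ⊔ b) ≤ p a ⊔ p b
    rw [hp]
    apply sInf_le
    have h1 : rel (p a ⊔ p b) (a ⊔ p b) := hH _ _ _ (hpb a)
    have h2 : rel (p b ⊔ a) (b ⊔ a) := hH _ _ _ (hpb b)
    rw [sup_comm (p b) a, sup_comm b a] at h2
    exact htrans _ _ _ h1 h2
  · -- p a ⊔ p b ≤ p (a ⊔ b)
    have key : ∀ c, c ≤ a ⊔ b → p c ≤ p (a ⊔ b) := by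
      intro c hc
      rw [hp, hp]
      apply le_sInf
      intro x hx
      have h := hdH _ _ c hx
      rw [inf_eq_right.mpr hc] at h
      exact le_trans (sInf_le h) inf_le_left
    exact sup_le (key a le_sup_left) (key b le_sup_right)
end

section
/- Let Q be a complete lattice, G a ∧-complete subset of Q (closed under infima of nonempty subsets), C a chain in G with b := ⊔C ∈ G, and a = ⊓C. If C is a maximal chain in G ∩ [a,b], then C is closed under infima of nonempty subsets; if moreover G is also closed under suprema of nonempty subsets, then C is complete (closed under both infima and suprema). -/
theorem stmt9 {Q : Type*} [CompleteLattice Q] (G C : Set Q)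
    (hG : ∀ N : Set Q, N ⊆ G → N.Nonempty → sInf N ∈ G)
    (hCchain : IsChain (· ≤ ·) C) (hCG : C ⊆ G) (hb : sSup C ∈ G)
    (hmax : ∀ D : Set Q, IsChain (· ≤ ·) D → C ⊆ D →
      D ⊆ G ∩ Set.Icc (sInf C) (sSup C) → D = C) :
    (∀ N : Set Q, N ⊆ C → N.Nonempty → sInf N ∈ C) ∧
    ((∀ N : Set Q, N ⊆ G → N.Nonempty → sSup N ∈ G) →
      ∀ N : Set Q, N ⊆ C → N.Nonempty → sSup N ∈ C) := by
  have key : ∀ m : Q, m ∈ G → sInf C ≤ m → m ≤ sSup C →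
      (∀ c ∈ C, m ≤ c ∨ c ≤ m) → m ∈ C := by
    intro m hmG h1 h2 hcomp
    have hD : insert m C = C := by
      apply hmax
      · intro x hx y hy hxy
        rcases hx with rfl | hx
        · rcases hy with rfl | hy
          · exact absurd rfl hxy
          · rcases hcomp y hy with h | h
            · exact Or.inl h
            · exact Or.inr h
        · rcases hy with rfl | hy
          · rcases hcomp x hx with h | h
            · exact Or.inr h
            · exact Or.inl h
          · exact hCchain hx hy hxy
      · exact Set.subset_insert _ _
      · intro x hx
        rcases hx with rfl | hx
        · exact ⟨hmG, h1, h2⟩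
        · exact ⟨hCG hx, sInf_le hx, le_sSup hx⟩
    rw [← hD]; exact Set.mem_insert _ _
  constructor
  · intro N hNC hNne
    obtain ⟨n, hn⟩ := hNne
    refine key _ (hG N (hNC.trans hCG) ⟨n, hn⟩)
      (le_sInf fun x hx => sInf_le (hNC hx))
      ((sInf_le hn).trans (le_sSup (hNC hn))) ?_
    intro c hc
    by_cases h : ∀ x ∈ N, c ≤ x
    · exact Or.inr (le_sInf h)
    · push_neg at h
      obtain ⟨x, hxN, hcx⟩ := h
      rcases hCchain.total (hNC hxN) hc with h | h
      · exact Or.inl ((sInf_le hxN).trans h)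
      · exact absurd h hcx
  · intro hGsup N hNC hNne
    obtain ⟨n, hn⟩ := hNne
    refine key _ (hGsup N (hNC.trans hCG) ⟨n, hn⟩)
      ((sInf_le (hNC hn)).trans (le_sSup hn))
      (sSup_le fun x hx => le_sSup (hNC hx)) ?_
    intro c hc
    by_cases h : ∀ x ∈ N, x ≤ c
    · exact Or.inl (sSup_le h)
    · push_neg at h
      obtain ⟨x, hxN, hxc⟩ := h
      rcases hCchain.total hc (hNC hxN) with h | h
      · exact Or.inr (h.trans (le_sSup hxN))
      · exact absurd h hxc
end

section
/- Let Q be a complete lattice, ≪ a reflexive relation stronger than ≤, and C ⊆ Q a ∧-complete lower ≪-gap chain with ⊔C ∈ C. Then C is also ∨-complete (hence complete). -/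
theorem stmt10 {Q : Type*} [CompleteLattice Q] (rel : Q → Q → Prop)
    (hrefl : ∀ a, rel a a) (hstr : ∀ a b, rel a b → a ≤ b)
    (C : Set Q) (hchain : IsChain (· ≤ ·) C)
    (hinf : ∀ N : Set Q, N ⊆ C → N.Nonempty → sInf N ∈ C)
    (hgap : ∀ x ∈ C, x ≠ sInf C →
      ∃ p ∈ C, p ≠ x ∧ rel p x ∧ Set.Icc p x ∩ C = {p, x})
    (htop : sSup C ∈ C) :
    ∀ N : Set Q, N ⊆ C → N.Nonempty → sSup N ∈ C := by
  intro N hNC hNne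
  set s := sSup N with hs
  set D := {x ∈ C | s ≤ x} with hD
  have hDC : D ⊆ C := fun x hx => hx.1
  have hDne : D.Nonempty := ⟨sSup C, htop, sSup_le_sSup hNC⟩
  have hmC : sInf D ∈ C := hinf D hDC hDne
  have hsm : s ≤ sInf D := le_sInf fun x hx => hx.2
  rcases eq_or_lt_of_le hsm with h | h
  · rwa [← h] at hmC
  · exfalso
    have hne : sInf D ≠ sInf C := by
      intro he
      obtain ⟨n, hn⟩ := hNne
      have : sInf D ≤ s :=
        calc sInf D = sInf C := he
          _ ≤ n := sInf_le (hNC hn)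
          _ ≤ s := le_sSup hn
      exact absurd this h.not_ge
    obtain ⟨p, hpC, hpne, hpr, hicc⟩ := hgap _ hmC hne
    have hpm : p ≤ sInf D := hstr _ _ hpr
    have hsp : s ≤ p := by
      apply sSup_le
      intro n hn
      rcases hchain.total (hNC hn) hpC with h1 | h1
      · exact h1
      · have hnm : n ≤ sInf D := le_trans (le_sSup hn) hsm
        have hmem : n ∈ Set.Icc p (sInf D) ∩ C := ⟨⟨h1, hnm⟩, hNC hn⟩
        rw [hicc] at hmem
        rcases hmem with rfl | rfl
        · exact le_rfl
        · exact (lt_irrefl _ (lt_of_le_of_lt (le_sSup hn) h)).elim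
    exact hpne (le_antisymm hpm (sInf_le ⟨hpC, hsp⟩))
end

section
/- Let Q be a complete lattice and ≪ a reflexive relation stronger than ≤. Define a ≪^◁ b iff a = b or there exists a complete lower ≪-gap chain from a to b. Then ≪^◁ is transitive and (≪^◁)^◁ = ≪^◁. -/
/-- `C` is a complete lower `rel`-gap chain from `a` to `b`. -/
def IsCompleteLowerGapChain {Q : Type*} [CompleteLattice Q]
    (rel : Q → Q → Prop) (a b : Q) (C : Set Q) : Prop :=
  IsChain (· ≤ ·) C ∧ a ∈ C ∧ b ∈ C ∧ sInf C = a ∧ sSup C = b ∧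
  (∀ N : Set Q, N ⊆ C → N.Nonempty → sInf N ∈ C) ∧
  (∀ N : Set Q, N ⊆ C → N.Nonempty → sSup N ∈ C) ∧
  ∀ x ∈ C, x ≠ a → ∃ p ∈ C, p ≠ x ∧ rel p x ∧ Set.Icc p x ∩ C = {p, x}

/-- The relation `≪^◁` constructed from `rel`. -/
def relTri {Q : Type*} [CompleteLattice Q] (rel : Q → Q → Prop) : Q → Q → Prop :=
  fun a b => a = b ∨ ∃ C : Set Q, IsCompleteLowerGapChain rel a b C

namespace LGCAux

variable {Q : Type*} [CompleteLattice Q] {rel : Q → Q → Prop} {a b c : Q} {C D : Set Q}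

lemma mem_le (h : IsCompleteLowerGapChain rel a b C) {z : Q} (hz : z ∈ C) :
    a ≤ z ∧ z ≤ b := by
  obtain ⟨-, -, -, hinf, hsup, -⟩ := h
  constructor
  · rw [← hinf]; exact sInf_le hz
  · rw [← hsup]; exact le_sSup hz

lemma gap_split (hC : IsChain (· ≤ ·) C) {p x : Q}
    (hIcc : Set.Icc p x ∩ C = {p, x}) {z : Q} (hz : z ∈ C) : z ≤ p ∨ x ≤ z := by
  have hp : p ∈ Set.Icc p x ∩ C := by rw [hIcc]; exact Set.mem_insert _ _
  have hx : x ∈ Set.Icc p x ∩ C := by rw [hIcc]; exact Set.mem_insert_of_mem _ rfl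
  rcases hC.total hz hp.2 with h1 | h1
  · exact Or.inl h1
  rcases hC.total hz hx.2 with h2 | h2
  · have hm : z ∈ Set.Icc p x ∩ C := ⟨⟨h1, h2⟩, hz⟩
    rw [hIcc] at hm
    simp only [Set.mem_insert_iff, Set.mem_singleton_iff] at hm
    rcases hm with rfl | rfl
    · exact Or.inl le_rfl
    · exact Or.inr le_rfl
  · exact Or.inr h2

lemma pair_chain (hstr : ∀ a b, rel a b → a ≤ b) (hab : rel a b) (hne : a ≠ b) :
    IsCompleteLowerGapChain rel a b {a, b} := by
  have hle : a ≤ b := hstr a b hab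
  refine ⟨?_, Set.mem_insert _ _, Set.mem_insert_of_mem _ rfl, ?_, ?_, ?_, ?_, ?_⟩
  · intro u hu v hv _
    simp only [Set.mem_insert_iff, Set.mem_singleton_iff] at hu hv
    rcases hu with rfl | rfl <;> rcases hv with rfl | rfl <;> simp [hle]
  · rw [sInf_pair]; exact inf_eq_left.mpr hle
  · rw [sSup_pair]; exact sup_eq_right.mpr hle
  · intro N hN hNne
    by_cases ha : a ∈ N
    · have : sInf N = a := by
        refine le_antisymm (sInf_le ha) (le_sInf fun m hm => ?_)
        rcases hN hm with rfl | hm'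
        · exact le_rfl
        · rw [Set.mem_singleton_iff] at hm'; subst hm'; exact hle
      rw [this]; exact Set.mem_insert _ _
    · obtain ⟨n, hn⟩ := hNne
      have hnb : n = b := by
        rcases hN hn with rfl | hm'
        · exact absurd hn ha
        · exact hm'
      subst hnb
      have : sInf N = n := by
        refine le_antisymm (sInf_le hn) (le_sInf fun m hm => ?_)
        rcases hN hm with rfl | hm'
        · exact absurd hm ha
        · rw [Set.mem_singleton_iff] at hm'; subst hm'; exact le_rfl
      rw [this]; exact Set.mem_insert_of_mem _ rfl
  · intro N hN hNne
    by_cases hb : b ∈ N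
    · have : sSup N = b := by
        refine le_antisymm (sSup_le fun m hm => ?_) (le_sSup hb)
        rcases hN hm with rfl | hm'
        · exact hle
        · rw [Set.mem_singleton_iff] at hm'; subst hm'; exact le_rfl
      rw [this]; exact Set.mem_insert_of_mem _ rfl
    · obtain ⟨n, hn⟩ := hNne
      have hna : n = a := by
        rcases hN hn with rfl | hm'
        · rfl
        · rw [Set.mem_singleton_iff] at hm'; exact absurd (hm' ▸ hn) hb
      subst hna
      have : sSup N = n := by
        refine le_antisymm (sSup_le fun m hm => ?_) (le_sSup hn)
        rcases hN hm with rfl | hm'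
        · exact le_rfl
        · rw [Set.mem_singleton_iff] at hm'; exact absurd (hm' ▸ hm) hb
      rw [this]; exact Set.mem_insert _ _
  · intro x hx hxa
    have hxb : x = b := by
      rcases hx with rfl | hx'
      · exact absurd rfl hxa
      · exact hx'
    subst hxb
    refine ⟨a, Set.mem_insert _ _, hne, hab, ?_⟩
    refine Set.inter_eq_right.mpr ?_
    intro z hz
    rcases hz with rfl | hz'
    · exact ⟨le_rfl, hle⟩
    · rw [Set.mem_singleton_iff] at hz'; subst hz'; exact ⟨hle, le_rfl⟩

lemma chain_mono {rel' : Q → Q → Prop} (h : ∀ x y, rel x y → rel' x y)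
    (hC : IsCompleteLowerGapChain rel a b C) : IsCompleteLowerGapChain rel' a b C := by
  obtain ⟨h1, h2, h3, h4, h5, h6, h7, h8⟩ := hC
  refine ⟨h1, h2, h3, h4, h5, h6, h7, fun x hx hxa => ?_⟩
  obtain ⟨p, hp, hpp, hr, hi⟩ := h8 x hx hxa
  exact ⟨p, hp, hpp, h _ _ hr, hi⟩

lemma union_chain (hC : IsCompleteLowerGapChain rel a b C)
    (hD : IsCompleteLowerGapChain rel b c D) :
    IsCompleteLowerGapChain rel a c (C ∪ D) := by
  obtain ⟨hCc, haC, hbC, hCi, hCs, hCic, hCsc, hCg⟩ := hC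
  have hC' : IsCompleteLowerGapChain rel a b C := ⟨hCc, haC, hbC, hCi, hCs, hCic, hCsc, hCg⟩
  obtain ⟨hDc, hbD, hcD, hDi, hDs, hDic, hDsc, hDg⟩ := hD
  have hD' : IsCompleteLowerGapChain rel b c D := ⟨hDc, hbD, hcD, hDi, hDs, hDic, hDsc, hDg⟩
  have hub : ∀ z ∈ C, z ≤ b := fun z hz => (mem_le hC' hz).2
  have hlb : ∀ z ∈ D, b ≤ z := fun z hz => (mem_le hD' hz).1
  refine ⟨?_, Or.inl haC, Or.inr hcD, ?_, ?_, ?_, ?_, ?_⟩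
  · rintro u (hu | hu) v (hv | hv) hne
    · exact hCc hu hv hne
    · exact Or.inl ((hub u hu).trans (hlb v hv))
    · exact Or.inr ((hub v hv).trans (hlb u hu))
    · exact hDc hu hv hne
  · refine le_antisymm (sInf_le (Or.inl haC)) (le_sInf ?_)
    rintro z (hz | hz)
    · exact (mem_le hC' hz).1
    · exact (mem_le hC' hbC).1.trans (hlb z hz)
  · refine le_antisymm (sSup_le ?_) (le_sSup (Or.inr hcD))
    rintro z (hz | hz)
    · exact (hub z hz).trans (mem_le hD' hbD).2
    · exact (mem_le hD' hz).2
  · intro N hN hNne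
    by_cases hNC : (N ∩ C).Nonempty
    · have heq : sInf N = sInf (N ∩ C) := by
        refine le_antisymm (sInf_le_sInf Set.inter_subset_left) (le_sInf fun n hn => ?_)
        rcases hN hn with hnC | hnD
        · exact sInf_le ⟨hn, hnC⟩
        · obtain ⟨m, hm⟩ := hNC
          exact (sInf_le hm).trans ((hub m hm.2).trans (hlb n hnD))
      rw [heq]
      exact Or.inl (hCic _ Set.inter_subset_right hNC)
    · have hsub : N ⊆ D := fun n hn => (hN hn).resolve_left fun h => hNC ⟨n, hn, h⟩
      exact Or.inr (hDic N hsub hNne)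
  · intro N hN hNne
    by_cases hND : (N ∩ D).Nonempty
    · have heq : sSup N = sSup (N ∩ D) := by
        refine le_antisymm (sSup_le fun n hn => ?_) (sSup_le_sSup Set.inter_subset_left)
        rcases hN hn with hnC | hnD
        · obtain ⟨m, hm⟩ := hND
          exact ((hub n hnC).trans (hlb m hm.2)).trans (le_sSup hm)
        · exact le_sSup ⟨hn, hnD⟩
      rw [heq]
      exact Or.inr (hDsc _ Set.inter_subset_right hND)
    · have hsub : N ⊆ C := fun n hn => (hN hn).resolve_right fun h => hND ⟨n, hn, h⟩
      exact Or.inl (hCsc N hsub hNne)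
  · intro x hx hxa
    by_cases hxC : x ∈ C
    · obtain ⟨p, hpC, hpne, hr, hIcc⟩ := hCg x hxC hxa
      refine ⟨p, Or.inl hpC, hpne, hr, ?_⟩
      apply Set.Subset.antisymm
      · rintro z ⟨hzI, hzC | hzD⟩
        · rw [← hIcc]; exact ⟨hzI, hzC⟩
        · have hzb : z = b := le_antisymm (hzI.2.trans (hub x hxC)) (hlb z hzD)
          rw [← hIcc]; exact ⟨hzI, hzb ▸ hbC⟩
      · intro z hz
        have : z ∈ Set.Icc p x ∩ C := by rw [hIcc]; exact hz
        exact ⟨this.1, Or.inl this.2⟩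
    · have hxD : x ∈ D := hx.resolve_left hxC
      have hxb : x ≠ b := fun h => hxC (h ▸ hbC)
      obtain ⟨p, hpD, hpne, hr, hIcc⟩ := hDg x hxD hxb
      refine ⟨p, Or.inr hpD, hpne, hr, ?_⟩
      apply Set.Subset.antisymm
      · rintro z ⟨hzI, hzC | hzD⟩
        · have : z = p := le_antisymm ((hub z hzC).trans (hlb p hpD)) hzI.1
          exact Or.inl this
        · rw [← hIcc]; exact ⟨hzI, hzD⟩
      · intro z hz
        have : z ∈ Set.Icc p x ∩ D := by rw [hIcc]; exact hz
        exact ⟨this.1, Or.inr this.2⟩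

lemma flatten (hC0 : IsCompleteLowerGapChain (relTri rel) a b C) :
    ∃ C', IsCompleteLowerGapChain rel a b C' := by
  classical
  obtain ⟨hch, haC, hbC, hinf, hsup, hic, hsc, hg⟩ := hC0
  have hC' : IsCompleteLowerGapChain (relTri rel) a b C :=
    ⟨hch, haC, hbC, hinf, hsup, hic, hsc, hg⟩
  have key : ∀ x : Q, ∃ p D, x ∈ C → x ≠ a →
      p ∈ C ∧ p ≠ x ∧ Set.Icc p x ∩ C = {p, x} ∧ IsCompleteLowerGapChain rel p x D := by
    intro x
    by_cases hx : x ∈ C ∧ x ≠ a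
    · obtain ⟨p, hpC, hpne, hr, hIcc⟩ := hg x hx.1 hx.2
      rcases (hr : p = x ∨ ∃ D, IsCompleteLowerGapChain rel p x D) with h | ⟨D, hD⟩
      · exact absurd h hpne
      · exact ⟨p, D, fun _ _ => ⟨hpC, hpne, hIcc, hD⟩⟩
    · exact ⟨x, ∅, fun h1 h2 => absurd ⟨h1, h2⟩ hx⟩
  choose pf Df hpf using key
  have hDch : ∀ x, x ∈ C → x ≠ a → IsCompleteLowerGapChain rel (pf x) x (Df x) :=
    fun x hx hxa => (hpf x hx hxa).2.2.2
  have hpfC : ∀ x, x ∈ C → x ≠ a → pf x ∈ C := fun x hx hxa => (hpf x hx hxa).1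
  have hpfne : ∀ x, x ∈ C → x ≠ a → pf x ≠ x := fun x hx hxa => (hpf x hx hxa).2.1
  have hIcc : ∀ x, x ∈ C → x ≠ a → Set.Icc (pf x) x ∩ C = {pf x, x} :=
    fun x hx hxa => (hpf x hx hxa).2.2.1
  have hDle : ∀ x, x ∈ C → x ≠ a → ∀ z ∈ Df x, pf x ≤ z ∧ z ≤ x :=
    fun x hx hxa z hz => mem_le (hDch x hx hxa) hz
  have hxD : ∀ x, x ∈ C → x ≠ a → x ∈ Df x := fun x hx hxa => (hDch x hx hxa).2.2.1
  have hpfD : ∀ x, x ∈ C → x ≠ a → pf x ∈ Df x := fun x hx hxa => (hDch x hx hxa).2.1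
  have hCle : ∀ z ∈ C, a ≤ z ∧ z ≤ b := fun z hz => mem_le hC' hz
  have L1 : ∀ x, x ∈ C → x ≠ a → ∀ z ∈ C, z ≤ pf x ∨ x ≤ z :=
    fun x hx hxa z hz => gap_split hch (hIcc x hx hxa) hz
  have ord : ∀ x, x ∈ C → x ≠ a → ∀ y, y ∈ C → y ≠ a →
      x = y ∨ x ≤ pf y ∨ y ≤ pf x := by
    intro x hx hxa y hy hya
    by_cases hxy : x = y
    · exact Or.inl hxy
    rcases L1 y hy hya x hx with h | h
    · exact Or.inr (Or.inl h)
    rcases L1 x hx hxa y hy with h' | h'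
    · exact Or.inr (Or.inr h')
    · exact Or.inl (le_antisymm h' h)
  have pinj : ∀ x, x ∈ C → x ≠ a → ∀ y, y ∈ C → y ≠ a → pf x = pf y → x = y := by
    intro x hx hxa y hy hya hpe
    rcases ord x hx hxa y hy hya with h | h | h
    · exact h
    · rw [← hpe] at h
      exact absurd (le_antisymm ((hDle x hx hxa x (hxD x hx hxa)).1) h) (hpfne x hx hxa)
    · rw [hpe] at h
      exact absurd (le_antisymm ((hDle y hy hya y (hxD y hy hya)).1) h) (hpfne y hy hya)
  refine ⟨C ∪ {z | ∃ x, x ∈ C ∧ x ≠ a ∧ z ∈ Df x}, ?_, Or.inl haC, Or.inl hbC,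
    ?_, ?_, ?_, ?_, ?_⟩
  · -- chain
    rintro u (hu | ⟨x, hx, hxa, hu⟩) v (hv | ⟨y, hy, hya, hv⟩) hne
    · exact hch hu hv hne
    · rcases L1 y hy hya u hu with h | h
      · exact Or.inl (h.trans (hDle y hy hya v hv).1)
      · exact Or.inr ((hDle y hy hya v hv).2.trans h)
    · rcases L1 x hx hxa v hv with h | h
      · exact Or.inr (h.trans (hDle x hx hxa u hu).1)
      · exact Or.inl ((hDle x hx hxa u hu).2.trans h)
    · by_cases hxy : x = y
      · subst hxy
        exact (hDch x hx hxa).1.total hu hv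
      · rcases ord x hx hxa y hy hya with h | h | h
        · exact absurd h hxy
        · exact Or.inl ((hDle x hx hxa u hu).2.trans (h.trans (hDle y hy hya v hv).1))
        · exact Or.inr ((hDle y hy hya v hv).2.trans (h.trans (hDle x hx hxa u hu).1))
  · -- sInf = a
    refine le_antisymm (sInf_le (Or.inl haC)) (le_sInf ?_)
    rintro z (hz | ⟨x, hx, hxa, hz⟩)
    · exact (hCle z hz).1
    · exact (hCle _ (hpfC x hx hxa)).1.trans (hDle x hx hxa z hz).1
  · -- sSup = b
    refine le_antisymm (sSup_le ?_) (le_sSup (Or.inl hbC))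
    rintro z (hz | ⟨x, hx, hxa, hz⟩)
    · exact (hCle z hz).2
    · exact (hDle x hx hxa z hz).2.trans (hCle x hx).2
  · -- inf-closed
    intro N hN hNne
    have hkey : ∀ n : Q, ∃ h : Q, n ∈ N → h ∈ C ∧ n ≤ h ∧
        ((n ∈ C ∧ h = n) ∨ (h ∈ C ∧ h ≠ a ∧ n ∈ Df h)) := by
      intro n
      by_cases hn : n ∈ N
      · rcases hN hn with hnC | ⟨x, hx, hxa, hnD⟩
        · exact ⟨n, fun _ => ⟨hnC, le_rfl, Or.inl ⟨hnC, rfl⟩⟩⟩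
        · exact ⟨x, fun _ => ⟨hx, (hDle x hx hxa n hnD).2, Or.inr ⟨hx, hxa, hnD⟩⟩⟩
      · exact ⟨n, fun h => absurd h hn⟩
    choose hi hhi using hkey
    have hm1C : sInf (hi '' N) ∈ C := by
      refine hic _ ?_ (hNne.image hi)
      rintro _ ⟨n, hn, rfl⟩; exact (hhi n hn).1
    by_cases hlow : ∀ n ∈ N, sInf (hi '' N) ≤ n
    · have heq : sInf N = sInf (hi '' N) := by
        refine le_antisymm (le_sInf ?_) (le_sInf hlow)
        rintro _ ⟨n, hn, rfl⟩; exact (sInf_le hn).trans (hhi n hn).2.1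
      rw [heq]; exact Or.inl hm1C
    · push_neg at hlow
      obtain ⟨n0, hn0, hn0m⟩ := hlow
      have hm1le : sInf (hi '' N) ≤ hi n0 := sInf_le ⟨n0, hn0, rfl⟩
      obtain ⟨hhC, hhle, hcase⟩ := hhi n0 hn0
      have hx0 : hi n0 ∈ C ∧ hi n0 ≠ a ∧ n0 ∈ Df (hi n0) := by
        rcases hcase with ⟨hnC, he⟩ | h
        · rw [he] at hm1le; exact absurd hm1le hn0m
        · exact h
      obtain ⟨hx0C, hx0a, hn0D⟩ := hx0
      have hm1x0 : sInf (hi '' N) = hi n0 := by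
        rcases L1 (hi n0) hx0C hx0a _ hm1C with h | h
        · exact absurd (h.trans (hDle _ hx0C hx0a n0 hn0D).1) hn0m
        · exact le_antisymm hm1le h
      have hsplit : ∀ n ∈ N, n ∈ Df (hi n0) ∨ hi n0 ≤ n := by
        intro n hn
        obtain ⟨hhC', hhle', hcase'⟩ := hhi n hn
        have hm1h : sInf (hi '' N) ≤ hi n := sInf_le ⟨n, hn, rfl⟩
        rw [hm1x0] at hm1h
        rcases hcase' with ⟨hnC, he⟩ | ⟨hyC, hya, hnD⟩
        · exact Or.inr (by rw [← he]; exact hm1h)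
        · by_cases hxy : hi n = hi n0
          · exact Or.inl (hxy ▸ hnD)
          · rcases L1 (hi n) hyC hya _ hx0C with h | h
            · exact Or.inr (h.trans (hDle (hi n) hyC hya n hnD).1)
            · exact absurd (le_antisymm h hm1h) hxy
      have hmemD : (N ∩ Df (hi n0)).Nonempty := ⟨n0, hn0, hn0D⟩
      have heq : sInf N = sInf (N ∩ Df (hi n0)) := by
        refine le_antisymm (sInf_le_sInf Set.inter_subset_left) (le_sInf fun n hn => ?_)
        rcases hsplit n hn with h | h
        · exact sInf_le ⟨hn, h⟩
        · have h1 : sInf (N ∩ Df (hi n0)) ≤ n0 := sInf_le ⟨hn0, hn0D⟩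
          exact h1.trans ((hDle _ hx0C hx0a n0 hn0D).2.trans h)
      rw [heq]
      exact Or.inr ⟨hi n0, hx0C, hx0a,
        (hDch _ hx0C hx0a).2.2.2.2.2.1 _ Set.inter_subset_right hmemD⟩
  · -- sup-closed
    intro N hN hNne
    have hkey : ∀ n : Q, ∃ l : Q, n ∈ N → l ∈ C ∧ l ≤ n ∧
        ((n ∈ C ∧ l = n) ∨ (∃ x, x ∈ C ∧ x ≠ a ∧ n ∈ Df x ∧ l = pf x)) := by
      intro n
      by_cases hn : n ∈ N
      · rcases hN hn with hnC | ⟨x, hx, hxa, hnD⟩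
        · exact ⟨n, fun _ => ⟨hnC, le_rfl, Or.inl ⟨hnC, rfl⟩⟩⟩
        · exact ⟨pf x, fun _ => ⟨hpfC x hx hxa, (hDle x hx hxa n hnD).1,
            Or.inr ⟨x, hx, hxa, hnD, rfl⟩⟩⟩
      · exact ⟨n, fun h => absurd h hn⟩
    choose lo hlo using hkey
    have hm0C : sSup (lo '' N) ∈ C := by
      refine hsc _ ?_ (hNne.image lo)
      rintro _ ⟨n, hn, rfl⟩; exact (hlo n hn).1
    by_cases hhigh : ∀ n ∈ N, n ≤ sSup (lo '' N)
    · have heq : sSup N = sSup (lo '' N) := by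
        refine le_antisymm (sSup_le hhigh) (sSup_le ?_)
        rintro _ ⟨n, hn, rfl⟩; exact (hlo n hn).2.1.trans (le_sSup hn)
      rw [heq]; exact Or.inl hm0C
    · push_neg at hhigh
      obtain ⟨n0, hn0, hn0m⟩ := hhigh
      have hm0le : lo n0 ≤ sSup (lo '' N) := le_sSup ⟨n0, hn0, rfl⟩
      obtain ⟨hlC, hlle, hcase⟩ := hlo n0 hn0
      have hx0 : ∃ x, x ∈ C ∧ x ≠ a ∧ n0 ∈ Df x ∧ lo n0 = pf x := by
        rcases hcase with ⟨hnC, he⟩ | h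
        · rw [he] at hm0le; exact absurd hm0le hn0m
        · exact h
      obtain ⟨x0, hx0C, hx0a, hn0D, hlon0⟩ := hx0
      rw [hlon0] at hm0le
      have hm0x0 : sSup (lo '' N) = pf x0 := by
        rcases L1 x0 hx0C hx0a _ hm0C with h | h
        · exact le_antisymm h hm0le
        · exact absurd ((hDle x0 hx0C hx0a n0 hn0D).2.trans h) hn0m
      have hsplit : ∀ n ∈ N, n ∈ Df x0 ∨ n ≤ pf x0 := by
        intro n hn
        obtain ⟨hlC', hlle', hcase'⟩ := hlo n hn
        have hm0h : lo n ≤ sSup (lo '' N) := le_sSup ⟨n, hn, rfl⟩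
        rw [hm0x0] at hm0h
        rcases hcase' with ⟨hnC, he⟩ | ⟨y, hyC, hya, hnD, hley⟩
        · exact Or.inr (by rw [← he]; exact hm0h)
        · rw [hley] at hm0h
          by_cases hxy : y = x0
          · exact Or.inl (hxy ▸ hnD)
          · rcases L1 y hyC hya _ (hpfC x0 hx0C hx0a) with h | h
            · exact absurd (pinj y hyC hya x0 hx0C hx0a (le_antisymm hm0h h)) hxy
            · exact Or.inr ((hDle y hyC hya n hnD).2.trans h)
      have hmemD : (N ∩ Df x0).Nonempty := ⟨n0, hn0, hn0D⟩
      have heq : sSup N = sSup (N ∩ Df x0) := by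
        refine le_antisymm (sSup_le fun n hn => ?_) (sSup_le_sSup Set.inter_subset_left)
        rcases hsplit n hn with h | h
        · exact le_sSup ⟨hn, h⟩
        · have h1 : n0 ≤ sSup (N ∩ Df x0) := le_sSup ⟨hn0, hn0D⟩
          exact (h.trans (hDle x0 hx0C hx0a n0 hn0D).1).trans h1
      rw [heq]
      exact Or.inr ⟨x0, hx0C, hx0a,
        (hDch x0 hx0C hx0a).2.2.2.2.2.2.1 _ Set.inter_subset_right hmemD⟩
  · -- gap condition
    intro z hz hza
    have hexists : ∃ x, x ∈ C ∧ x ≠ a ∧ z ∈ Df x ∧ z ≠ pf x := by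
      by_cases hzC : z ∈ C
      · exact ⟨z, hzC, hza, hxD z hzC hza, Ne.symm (hpfne z hzC hza)⟩
      · rcases hz with h | ⟨x, hx, hxa, hzD⟩
        · exact absurd h hzC
        · exact ⟨x, hx, hxa, hzD, fun he => hzC (he ▸ hpfC x hx hxa)⟩
    obtain ⟨x, hx, hxa, hzD, hzp⟩ := hexists
    obtain ⟨q, hqD, hqne, hqrel, hqIcc⟩ := (hDch x hx hxa).2.2.2.2.2.2.2 z hzD hzp
    refine ⟨q, Or.inr ⟨x, hx, hxa, hqD⟩, hqne, hqrel, ?_⟩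
    apply Set.Subset.antisymm
    · rintro w ⟨hwI, hwC | ⟨y, hy, hya, hwD⟩⟩
      · have hw1 : pf x ≤ w := (hDle x hx hxa q hqD).1.trans hwI.1
        have hw2 : w ≤ x := hwI.2.trans (hDle x hx hxa z hzD).2
        have hwm : w ∈ ({pf x, x} : Set Q) := by
          rw [← hIcc x hx hxa]; exact ⟨⟨hw1, hw2⟩, hwC⟩
        rw [Set.mem_insert_iff, Set.mem_singleton_iff] at hwm
        rcases hwm with he | he
        · have hwq : w = q := le_antisymm
            (by rw [he]; exact (hDle x hx hxa q hqD).1) hwI.1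
          exact Set.mem_insert_iff.mpr (Or.inl hwq)
        · have hwz : w = z := le_antisymm hwI.2
            (by rw [he]; exact (hDle x hx hxa z hzD).2)
          exact Set.mem_insert_iff.mpr (Or.inr (Set.mem_singleton_iff.mpr hwz))
      · by_cases hxy : y = x
        · subst hxy
          rw [← hqIcc]; exact ⟨hwI, hwD⟩
        · rcases ord y hy hya x hx hxa with h | h | h
          · exact absurd h hxy
          · refine Set.mem_insert_iff.mpr (Or.inl ?_)
            exact le_antisymm
              ((hDle y hy hya w hwD).2.trans (h.trans (hDle x hx hxa q hqD).1)) hwI.1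
          · refine Set.mem_insert_iff.mpr (Or.inr (Set.mem_singleton_iff.mpr ?_))
            exact le_antisymm hwI.2
              (((hDle x hx hxa z hzD).2.trans h).trans (hDle y hy hya w hwD).1)
    · intro w hw
      have hw' : w ∈ Set.Icc q z ∩ Df x := by rw [hqIcc]; exact hw
      exact ⟨hw'.1, Or.inr ⟨x, hx, hxa, hw'.2⟩⟩

end LGCAux

theorem stmt12 {Q : Type*} [CompleteLattice Q] (rel : Q → Q → Prop)
    (hrefl : ∀ a, rel a a) (hstr : ∀ a b, rel a b → a ≤ b) :
    Transitive (relTri rel) ∧ relTri (relTri rel) = relTri rel := by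
  constructor
  · intro x y z hxy hyz
    rcases (hxy : x = y ∨ ∃ C, IsCompleteLowerGapChain rel x y C) with rfl | ⟨C, hC⟩
    · exact hyz
    rcases (hyz : y = z ∨ ∃ D, IsCompleteLowerGapChain rel y z D) with rfl | ⟨D, hD⟩
    · exact Or.inr ⟨C, hC⟩
    · exact Or.inr ⟨C ∪ D, LGCAux.union_chain hC hD⟩
  · funext x y
    apply propext
    constructor
    · rintro (rfl | ⟨C, hC⟩)
      · exact Or.inl rfl
      · obtain ⟨C', hC'⟩ := LGCAux.flatten hC
        exact Or.inr ⟨C', hC'⟩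
    · rintro (rfl | ⟨C, hC⟩)
      · exact Or.inl rfl
      · refine Or.inr ⟨C, LGCAux.chain_mono (fun u v huv => ?_) hC⟩
        by_cases huv' : u = v
        · exact Or.inl huv'
        · exact Or.inr ⟨{u, v}, LGCAux.pair_chain hstr huv huv'⟩
end

section
/- Let Q be a complete lattice and ≪ a down-expanded transitive reflexive relation stronger than ≤. Then ≪ = ≪^◁, i.e., if there exists a complete lower ≪-gap chain from a to b then a ≪ b. -/
theorem stmt13 {Q : Type*} [CompleteLattice Q] (rel : Q → Q → Prop)
    (hrefl : ∀ a, rel a a) (hstr : ∀ a b, rel a b → a ≤ b)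
    (htrans : ∀ a b c, rel a b → rel b c → rel a c)
    (hde : ∀ b, ∀ N : Set Q, N.Nonempty → (∀ x ∈ N, rel x b) → rel (sInf N) b) :
    ∀ a b : Q, rel a b ↔
      (a = b ∨ ∃ C : Set Q, IsCompleteLowerGapChain rel a b C) := by
  intro a b
  constructor
  · intro hab
    by_cases hne : a = b
    · exact Or.inl hne
    · right
      refine ⟨{a, b}, ?_, ?_, ?_, ?_, ?_, ?_, ?_, ?_⟩
      · have hle := hstr a b hab
        intro x hx y hy hxy
        rcases hx with rfl | hx <;> rcases hy with rfl | hy <;> simp_all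
      · simp
      · simp
      · simp [inf_eq_left.mpr (hstr a b hab)]
      · simp [sup_eq_right.mpr (hstr a b hab)]
      · intro N hN hNne
        have key : N = {a} ∨ N = {b} ∨ N = {a, b} := by
          by_cases ha : a ∈ N <;> by_cases hb : b ∈ N
          · right; right
            exact Set.Subset.antisymm hN (by intro x hx; rcases hx with rfl | hx; exact ha; simp_all)
          · left
            refine Set.Subset.antisymm ?_ (by simp [ha])
            intro x hx
            rcases hN hx with rfl | h
            · simp
            · simp at h; subst h; exact absurd hx hb
          · right; left
            refine Set.Subset.antisymm ?_ (by simp [hb])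
            intro x hx
            rcases hN hx with rfl | h
            · exact absurd hx ha
            · simp_all
          · obtain ⟨x, hx⟩ := hNne
            rcases hN hx with rfl | h
            · exact absurd hx ha
            · simp at h; subst h; exact absurd hx hb
        rcases key with rfl | rfl | rfl <;>
          simp [inf_eq_left.mpr (hstr a b hab)]
      · intro N hN hNne
        have key : N = {a} ∨ N = {b} ∨ N = {a, b} := by
          by_cases ha : a ∈ N <;> by_cases hb : b ∈ N
          · right; right
            exact Set.Subset.antisymm hN (by intro x hx; rcases hx with rfl | hx; exact ha; simp_all)
          · left
            refine Set.Subset.antisymm ?_ (by simp [ha])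
            intro x hx
            rcases hN hx with rfl | h
            · simp
            · simp at h; subst h; exact absurd hx hb
          · right; left
            refine Set.Subset.antisymm ?_ (by simp [hb])
            intro x hx
            rcases hN hx with rfl | h
            · exact absurd hx ha
            · simp_all
          · obtain ⟨x, hx⟩ := hNne
            rcases hN hx with rfl | h
            · exact absurd hx ha
            · simp at h; subst h; exact absurd hx hb
        rcases key with rfl | rfl | rfl <;>
          simp [sup_eq_right.mpr (hstr a b hab)]
      · intro x hx hxa
        rcases hx with rfl | hx
        · exact absurd rfl hxa
        · simp at hx; subst hx
          refine ⟨a, by simp, hne, hab, ?_⟩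
          apply Set.Subset.antisymm
          · intro y hy; exact hy.2
          · intro y hy
            rcases hy with rfl | hy
            · exact ⟨⟨le_refl _, hstr _ _ hab⟩, by simp⟩
            · simp at hy; subst hy
              exact ⟨⟨hstr _ _ hab, le_refl _⟩, by simp⟩
  · rintro (rfl | ⟨C, hchain, haC, hbC, hinfC, hsupC, hinfcl, hsupcl, hgap⟩)
    · exact hrefl a
    · set S : Set Q := {x ∈ C | rel x b} with hS
      have hSne : S.Nonempty := ⟨b, hbC, hrefl b⟩
      have hSsub : S ⊆ C := fun x hx => hx.1
      set m := sInf S with hm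
      have hmC : m ∈ C := hinfcl S hSsub hSne
      have hmb : rel m b := hde b S hSne (fun x hx => hx.2)
      by_cases hma : m = a
      · rw [← hma]; exact hmb
      · obtain ⟨p, hpC, hpm, hpmrel, _⟩ := hgap m hmC hma
        have hpb : rel p b := htrans p m b hpmrel hmb
        have : m ≤ p := sInf_le ⟨hpC, hpb⟩
        exact absurd (le_antisymm (hstr p m hpmrel) this) hpm
end
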